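/- (Johnson–Lindenstrauss lemma for finite sets) Let M ⊂ ℝ^d be a set of n points, ε ∈ (0,1/2), and k > 8 log n / ε². If A is a k×d matrix with i.i.d. N(0,1/k) entries, then with positive probability, for all pairs u, v ∈ M simultaneously, (1−ε)‖u−v‖² ≤ ‖Au−Av‖² ≤ (1+ε)‖u−v‖². -/

import Mathlib

open Real MeasureTheory ProbabilityTheory Finset
open scoped ENNReal NNReal

private lemma deriv_helper {F : ℝ → ℝ} {G : ℝ → ℝ}
    (hF : ∀ x ∈ Set.Ici (0:ℝ), HasDerivAt F (G x) x)
    (hG : ∀ x ∈ Set.Ici (0:ℝ), 0 ≤ G x) {s : ℝ} (hs : 0 ≤ s) : F 0 ≤ F s := by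
  have hmono : MonotoneOn F (Set.Ici (0:ℝ)) := by
    refine monotoneOn_of_deriv_nonneg (convex_Ici 0) ?_ ?_ ?_
    · exact fun x hx => (hF x hx).continuousAt.continuousWithinAt
    · intro x hx
      rw [interior_Ici] at hx
      exact (hF x (Set.mem_Ici.mpr (le_of_lt (Set.mem_Ioi.mp hx)))).differentiableAt.differentiableWithinAt
    · intro x hx
      rw [interior_Ici] at hx
      rw [(hF x (Set.mem_Ici.mpr (le_of_lt (Set.mem_Ioi.mp hx)))).deriv]
      exact hG x (Set.mem_Ici.mpr (le_of_lt (Set.mem_Ioi.mp hx)))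
  exact hmono (Set.self_mem_Ici) hs hs

private lemma log_le_cubic {s : ℝ} (hs : 0 ≤ s) :
    Real.log (1 + s) ≤ s - s^2/2 + s^3/3 := by
  have h := deriv_helper (F := fun x => x - x^2/2 + x^3/3 - Real.log (1+x))
    (G := fun x => 1 - x + x^2 - 1/(1+x)) ?_ ?_ hs
  · simp at h; linarith
  · intro x hx
    have hx1 : (0:ℝ) < 1 + x := by simp at hx; linarith
    have hlog : HasDerivAt (fun y : ℝ => Real.log (1+y)) (1/(1+x)) x := by
      have h1 : HasDerivAt (fun y : ℝ => 1 + y) 1 x := (hasDerivAt_id x).const_add 1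
      simpa using h1.log (ne_of_gt hx1)
    have hpoly : HasDerivAt (fun y : ℝ => y - y^2/2 + y^3/3) (1 - x + x^2) x := by
      have := (((hasDerivAt_pow 2 x).div_const 2)).const_add 0
      have h2 : HasDerivAt (fun y : ℝ => y) 1 x := hasDerivAt_id x
      have h3 : HasDerivAt (fun y : ℝ => y^2/2) x x := by
        simpa using (hasDerivAt_pow 2 x).div_const 2
      have h4 : HasDerivAt (fun y : ℝ => y^3/3) (x^2) x := by
        simpa using (hasDerivAt_pow 3 x).div_const 3
      exact (h2.sub h3).add h4
    exact hpoly.sub hlog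
  · intro x hx
    simp only [Set.mem_Ici] at hx
    have hx1 : (0:ℝ) < 1 + x := by linarith
    rw [sub_nonneg, div_le_iff₀ hx1]
    nlinarith [pow_nonneg hx 3]

private lemma neg_log_le_quad {y : ℝ} (h0 : 0 ≤ y) (h1 : y ≤ 1/2) :
    -Real.log (1 - y) ≤ y + y^2 := by
  -- F x = x + x^2 + log (1 - x) is monotone on [0, 1/2]
  have hmono : MonotoneOn (fun x : ℝ => x + x^2 + Real.log (1-x)) (Set.Icc (0:ℝ) (1/2)) := by
    refine monotoneOn_of_deriv_nonneg (convex_Icc 0 (1/2)) ?_ ?_ ?_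
    · intro x hx
      have hx1 : (0:ℝ) < 1 - x := by simp [Set.mem_Icc] at hx; linarith
      exact (((hasDerivAt_id x).add ((hasDerivAt_pow 2 x))).add
        (((hasDerivAt_id x).const_sub 1).log (ne_of_gt hx1))).continuousAt.continuousWithinAt
    · intro x hx
      rw [interior_Icc] at hx
      have hx1 : (0:ℝ) < 1 - x := by simp [Set.mem_Ioo] at hx; linarith
      exact (((hasDerivAt_id x).add ((hasDerivAt_pow 2 x))).add
        (((hasDerivAt_id x).const_sub 1).log (ne_of_gt hx1))).differentiableAt.differentiableWithinAt
    · intro x hx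
      rw [interior_Icc, Set.mem_Ioo] at hx
      have hx1 : (0:ℝ) < 1 - x := by linarith
      have hd : HasDerivAt (fun x : ℝ => x + x^2 + Real.log (1-x))
          (1 + 2*x + (-1)/(1-x)) x := by
        have := ((hasDerivAt_id x).const_sub 1).log (ne_of_gt hx1)
        have h := ((hasDerivAt_id x).add ((hasDerivAt_pow 2 x))).add this
        simp at h
        exact h
      rw [hd.deriv]
      rw [← sub_nonneg] at *
      have : (1 + 2*x) * (1-x) - 1 ≥ 0 := by nlinarith
      have h2 : (1:ℝ)/(1-x) ≤ 1 + 2*x := by rw [div_le_iff₀ hx1]; nlinarith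
      have : (-1)/(1-x) = -(1/(1-x)) := by ring
      rw [this]; linarith
  have := hmono (Set.mem_Icc.mpr ⟨le_refl 0, by norm_num⟩) (Set.mem_Icc.mpr ⟨h0, h1⟩) h0
  simp at this
  linarith

private lemma quartic_le_neg_log {s : ℝ} (h0 : 0 ≤ s) (h1 : s < 1) :
    s + s^2/2 + s^3/3 + s^4/4 ≤ -Real.log (1 - s) := by
  have hmono : MonotoneOn (fun x : ℝ => -Real.log (1-x) - x - x^2/2 - x^3/3 - x^4/4)
      (Set.Icc (0:ℝ) s) := by
    refine monotoneOn_of_deriv_nonneg (convex_Icc 0 s) ?_ ?_ ?_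
    all_goals intro x hx
    · have hx1 : (0:ℝ) < 1 - x := by
        simp [Set.mem_Icc] at hx; linarith [hx.2]
      have hd : HasDerivAt (fun x : ℝ => -Real.log (1-x) - x - x^2/2 - x^3/3 - x^4/4)
          (-((-1)/(1-x)) - 1 - x - x^2 - x^3) x := by
        have hl := ((hasDerivAt_id x).const_sub 1).log (ne_of_gt hx1)
        have h2 : HasDerivAt (fun y : ℝ => y^2/2) x x := by
          simpa using (hasDerivAt_pow 2 x).div_const 2
        have h3 : HasDerivAt (fun y : ℝ => y^3/3) (x^2) x := by
          simpa using (hasDerivAt_pow 3 x).div_const 3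
        have h4 : HasDerivAt (fun y : ℝ => y^4/4) (x^3) x := by
          simpa using (hasDerivAt_pow 4 x).div_const 4
        exact ((((hl.neg).sub (hasDerivAt_id x)).sub h2).sub h3).sub h4
      exact hd.continuousAt.continuousWithinAt
    · rw [interior_Icc] at hx
      have hx1 : (0:ℝ) < 1 - x := by simp [Set.mem_Ioo] at hx; linarith [hx.2]
      have hl := ((hasDerivAt_id x).const_sub 1).log (ne_of_gt hx1)
      have h2 : HasDerivAt (fun y : ℝ => y^2/2) x x := by
        simpa using (hasDerivAt_pow 2 x).div_const 2
      have h3 : HasDerivAt (fun y : ℝ => y^3/3) (x^2) x := by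
        simpa using (hasDerivAt_pow 3 x).div_const 3
      have h4 : HasDerivAt (fun y : ℝ => y^4/4) (x^3) x := by
        simpa using (hasDerivAt_pow 4 x).div_const 4
      exact (((((hl.neg).sub (hasDerivAt_id x)).sub h2).sub h3).sub h4).differentiableAt.differentiableWithinAt
    · rw [interior_Icc, Set.mem_Ioo] at hx
      have hx1 : (0:ℝ) < 1 - x := by linarith [hx.2]
      have hx0 : 0 ≤ x := le_of_lt hx.1
      have hd : HasDerivAt (fun x : ℝ => -Real.log (1-x) - x - x^2/2 - x^3/3 - x^4/4)
          (-((-1)/(1-x)) - 1 - x - x^2 - x^3) x := by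
        have hl := ((hasDerivAt_id x).const_sub 1).log (ne_of_gt hx1)
        have h2 : HasDerivAt (fun y : ℝ => y^2/2) x x := by
          simpa using (hasDerivAt_pow 2 x).div_const 2
        have h3 : HasDerivAt (fun y : ℝ => y^3/3) (x^2) x := by
          simpa using (hasDerivAt_pow 3 x).div_const 3
        have h4 : HasDerivAt (fun y : ℝ => y^4/4) (x^3) x := by
          simpa using (hasDerivAt_pow 4 x).div_const 4
        exact ((((hl.neg).sub (hasDerivAt_id x)).sub h2).sub h3).sub h4
      rw [hd.deriv]
      have key : (1 + x + x^2 + x^3) * (1 - x) ≤ 1 := by nlinarith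
      have : (1:ℝ) + x + x^2 + x^3 ≤ 1/(1-x) := by rw [le_div_iff₀ hx1]; linarith
      have hn : -((-1)/(1-x)) = 1/(1-x) := by ring
      rw [hn]; linarith
  have := hmono (Set.mem_Icc.mpr ⟨le_refl 0, h0⟩) (Set.mem_Icc.mpr ⟨h0, le_refl s⟩) h0
  simp at this
  linarith

private lemma ineqA {ε : ℝ} (h0 : 0 < ε) (h1 : ε < 1/2) :
    ε^2/2 ≤ (1+ε)/(1-ε^2/3) - 1 - Real.log ((1+ε)/(1-ε^2/3)) := by
  set y : ℝ := ε^2/3 with hy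
  have hy0 : 0 < y := by positivity
  have hy12 : y ≤ 1/12 := by rw [hy]; nlinarith
  have hcy : (0:ℝ) < 1 - y := by linarith
  have hε1 : (0:ℝ) < 1 + ε := by linarith
  rw [Real.log_div (ne_of_gt hε1) (ne_of_gt hcy)]
  have hL1 : Real.log (1 + ε) ≤ ε - ε^2/2 + ε^3/3 := log_le_cubic (le_of_lt h0)
  have hL2 : -Real.log (1 - y) ≤ y + y^2 := neg_log_le_quad (le_of_lt hy0) (by linarith)
  have hdiv : 1 + (ε + y) + (ε+y)*y ≤ (1+ε)/(1-y) := by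
    rw [le_div_iff₀ hcy]
    nlinarith [sq_nonneg (ε+y), mul_nonneg (mul_nonneg (le_of_lt hy0) (le_of_lt hy0)) (le_of_lt hy0)]
  have hyε : ε*y = ε^3/3 := by rw [hy]; ring
  nlinarith [hL1, hL2, hdiv]

private lemma ineqB {ε : ℝ} (h0 : 0 < ε) (h1 : ε < 1/2) :
    ε^2/2 ≤ (1-ε)/(1-ε^2/3) - 1 - Real.log ((1-ε)/(1-ε^2/3)) := by
  set y : ℝ := ε^2/3 with hy
  have hy0 : 0 < y := by positivity
  have hy12 : y ≤ 1/12 := by rw [hy]; nlinarith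
  have hcy : (0:ℝ) < 1 - y := by linarith
  have hε1 : (0:ℝ) < 1 - ε := by linarith
  rw [Real.log_div (ne_of_gt hε1) (ne_of_gt hcy)]
  have hL4 : ε + ε^2/2 + ε^3/3 + ε^4/4 ≤ -Real.log (1 - ε) :=
    quartic_le_neg_log (le_of_lt h0) (by linarith)
  have hL2 : -Real.log (1 - y) ≤ y + y^2 := neg_log_le_quad (le_of_lt hy0) (by linarith)
  have hyltε : y < ε := by rw [hy]; nlinarith
  -- (1-ε)/(1-y) - 1 = -(ε-y)/(1-y) ≥ -(ε-y)*(1+2y)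
  have hdiv : 1 - (ε - y)*(1+y+2*y^2) ≤ (1-ε)/(1-y) := by
    rw [le_div_iff₀ hcy]
    nlinarith [mul_pos hy0 hy0, mul_nonneg (mul_nonneg (le_of_lt hy0) (le_of_lt hy0)) (le_of_lt hy0),
      mul_nonneg (mul_nonneg (le_of_lt hy0) (le_of_lt hy0)) (sub_nonneg.mpr (le_of_lt hyltε)),
      mul_nonneg (mul_nonneg (mul_nonneg (le_of_lt hy0) (le_of_lt hy0)) (le_of_lt hy0)) (sub_nonneg.mpr (le_of_lt hyltε))]
  have hyε : ε*y = ε^3/3 := by rw [hy]; ring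
  have hy2 : y^2 = ε^4/9 := by rw [hy]; ring
  have hy3 : y^3 = ε^6/27 := by rw [hy]; ring
  nlinarith [hL4, hL2, hdiv, pow_pos h0 4, pow_pos h0 5, pow_pos h0 6]

private lemma gauss_lintegral (w : ℝ≥0) (hw : w ≠ 0) (τ c r : ℝ)
    (h : 2 * τ * (w:ℝ) * c^2 < 1) :
    ∫⁻ y, ENNReal.ofReal (Real.exp (τ * (c*y + r)^2)) ∂(gaussianReal 0 w)
      = ENNReal.ofReal ((Real.sqrt (1 - 2*τ*(w:ℝ)*c^2))⁻¹ *
          Real.exp ((τ/(1 - 2*τ*(w:ℝ)*c^2)) * r^2)) := by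
  have hwR : (0:ℝ) < (w:ℝ) := lt_of_le_of_ne w.2 (by exact_mod_cast (Ne.symm hw))
  set A : ℝ := 1 - 2*τ*(w:ℝ)*c^2 with hA
  have hA0 : 0 < A := by rw [hA]; linarith
  set B : ℝ := A / (2*(w:ℝ)) with hB
  have hB0 : 0 < B := by positivity
  set L : ℝ := 2*τ*c*r with hL
  set m : ℝ := L/(2*B) with hm
  set K : ℝ := (Real.sqrt (2*Real.pi*(w:ℝ)))⁻¹ * Real.exp (L^2/(4*B) + τ*r^2) with hK
  have hK0 : 0 ≤ K := by positivity
  have hmeas : Measurable fun y : ℝ => ENNReal.ofReal (Real.exp (τ*(c*y + r)^2)) := by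
    have h1 : Measurable fun y : ℝ => τ*(c*y + r)^2 :=
      (((measurable_id.const_mul c).add_const r).pow_const 2).const_mul τ
    exact (Real.measurable_exp.comp h1).ennreal_ofReal
  have hpoint : ∀ y : ℝ, gaussianPDFReal 0 w y * Real.exp (τ*(c*y + r)^2)
      = K * Real.exp (-B * (y - m)^2) := by
    intro y
    have hmul : ∀ (s a b : ℝ), (s * Real.exp a) * Real.exp b = s * Real.exp (a+b) := by
      intros; rw [mul_assoc, ← Real.exp_add]
    rw [gaussianPDFReal, hK, hmul, hmul]
    congr 1
    have hpi : (0:ℝ) < Real.pi := Real.pi_pos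
    have hw' : (w:ℝ) ≠ 0 := ne_of_gt hwR
    have hAne' : A ≠ 0 := ne_of_gt hA0
    rw [hm, hB, hL]
    field_simp
    congr 1
    rw [div_eq_div_iff (mul_ne_zero two_ne_zero hw')
      (mul_ne_zero (mul_ne_zero (mul_ne_zero two_ne_zero hw') four_ne_zero) hAne'), hA]
    ring
  calc ∫⁻ y, ENNReal.ofReal (Real.exp (τ * (c*y + r)^2)) ∂(gaussianReal 0 w)
      = ∫⁻ y, gaussianPDF 0 w y * ENNReal.ofReal (Real.exp (τ * (c*y + r)^2)) ∂volume := by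
        rw [gaussianReal_of_var_ne_zero 0 hw]
        rw [lintegral_withDensity_eq_lintegral_mul _ (measurable_gaussianPDF 0 w) hmeas]
        rfl
    _ = ∫⁻ y, ENNReal.ofReal (K * Real.exp (-B * (y - m)^2)) ∂volume := by
        congr 1
        ext y
        rw [gaussianPDF, ← ENNReal.ofReal_mul (gaussianPDFReal_nonneg 0 w y), hpoint y]
    _ = ENNReal.ofReal (∫ y, K * Real.exp (-B * (y - m)^2) ∂volume) := by
        rw [← ofReal_integral_eq_lintegral_ofReal]
        · exact (((integrable_exp_neg_mul_sq hB0).comp_sub_right m).const_mul K)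
        · filter_upwards with y
          positivity
    _ = ENNReal.ofReal ((Real.sqrt A)⁻¹ * Real.exp ((τ/A) * r^2)) := by
        congr 1
        rw [MeasureTheory.integral_const_mul]
        have hshift : ∫ y : ℝ, Real.exp (-B * (y - m)^2) ∂volume
            = ∫ y : ℝ, Real.exp (-B * y^2) ∂volume := by
          exact integral_sub_right_eq_self (fun y => Real.exp (-B * y^2)) m
        rw [hshift, integral_gaussian]
        -- K * √(π/B) = (√A)⁻¹ * exp (τ/A * r²)
        rw [hK]
        have hsq : (Real.sqrt (2*Real.pi*(w:ℝ)))⁻¹ * Real.sqrt (Real.pi / B) = (Real.sqrt A)⁻¹ := by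
          rw [← Real.sqrt_inv, ← Real.sqrt_inv, ← Real.sqrt_mul (by positivity)]
          congr 1
          have hpi : (0:ℝ) < Real.pi := Real.pi_pos
          rw [hB]
          rw [eq_comm, inv_eq_iff_eq_inv, eq_comm]
          field_simp
        have hexp : Real.exp (L^2/(4*B) + τ*r^2) = Real.exp ((τ/A) * r^2) := by
          congr 1
          rw [hL, hB]
          field_simp
          ring
        calc (Real.sqrt (2*Real.pi*(w:ℝ)))⁻¹ * Real.exp (L^2/(4*B) + τ*r^2) * Real.sqrt (Real.pi / B)
            = ((Real.sqrt (2*Real.pi*(w:ℝ)))⁻¹ * Real.sqrt (Real.pi / B)) * Real.exp (L^2/(4*B) + τ*r^2) := by ring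
          _ = (Real.sqrt A)⁻¹ * Real.exp ((τ/A) * r^2) := by rw [hsq, hexp]

set_option maxHeartbeats 1000000 in
private lemma mgf_lintegral {k d : ℕ} (w : ℝ≥0) (hw : w ≠ 0) (x : Fin d → ℝ) (t : ℝ)
    (ht : 2 * t * (w:ℝ) * (∑ i, x i ^ 2) < 1) :
    ∫⁻ a : (Fin k × Fin d) → ℝ,
        ENNReal.ofReal (Real.exp (t * ∑ j, (∑ i, x i * a (j, i)) ^ 2))
        ∂(Measure.pi fun _ : Fin k × Fin d => gaussianReal 0 w)
      = ENNReal.ofReal ((Real.sqrt (1 - 2*t*(w:ℝ)*(∑ i, x i ^ 2)))⁻¹ ^ k) := by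
  classical
  set σ2 : ℝ := ∑ i, x i ^ 2 with hσ2def
  have hσ2 : 0 ≤ σ2 := Finset.sum_nonneg fun i _ => sq_nonneg _
  have hwnn : (0:ℝ) ≤ (w:ℝ) := w.2
  have hden : ∀ m : ℝ, 0 ≤ m → m ≤ σ2 → 0 < 1 - 2*t*(w:ℝ)*m := by
    intro m hm0 hmσ
    rcases le_or_gt t 0 with h'|h'
    · nlinarith [mul_nonneg (mul_nonneg (by linarith : (0:ℝ) ≤ -(2*t)) hwnn) hm0]
    · nlinarith [mul_le_mul_of_nonneg_left hmσ (mul_nonneg (by linarith : (0:ℝ) ≤ 2*t) hwnn)]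
  set F : ((Fin k × Fin d) → ℝ) → ℝ≥0∞ :=
    fun a => ENNReal.ofReal (Real.exp (t * ∑ j, (∑ i, x i * a (j, i)) ^ 2)) with hF
  have hFmeas : Measurable F := by
    have hsum : Measurable fun a : (Fin k × Fin d) → ℝ => ∑ j, (∑ i, x i * a (j,i))^2 :=
      Finset.measurable_sum _ (fun j _ =>
        (Finset.measurable_sum _ fun i _ =>
          ((measurable_pi_apply ((j,i)) : Measurable fun a : (Fin k × Fin d) → ℝ => a (j,i))).const_mul (x i)).pow_const 2)
    exact (Real.measurable_exp.comp (hsum.const_mul t)).ennreal_ofReal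
  have hm0 : ∀ (s : Finset (Fin k × Fin d)) (j : Fin k),
      (0:ℝ) ≤ ∑ i ∈ Finset.univ.filter (fun i => (j, i) ∈ s), x i ^ 2 :=
    fun s j => Finset.sum_nonneg fun i _ => sq_nonneg _
  have hmσ : ∀ (s : Finset (Fin k × Fin d)) (j : Fin k),
      ∑ i ∈ Finset.univ.filter (fun i => (j, i) ∈ s), x i ^ 2 ≤ σ2 :=
    fun s j => Finset.sum_le_sum_of_subset_of_nonneg (Finset.filter_subset _ _)
      (fun i _ _ => sq_nonneg _)
  have hdpos : ∀ (s : Finset (Fin k × Fin d)) (j : Fin k),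
      0 < 1 - 2*t*(w:ℝ)*(∑ i ∈ Finset.univ.filter (fun i => (j, i) ∈ s), x i ^ 2) :=
    fun s j => hden _ (hm0 s j) (hmσ s j)
  have main : ∀ s : Finset (Fin k × Fin d),
      (∫⋯∫⁻_s, F ∂(fun _ => gaussianReal 0 w)) = fun a =>
        ENNReal.ofReal (∏ j,
          ((Real.sqrt (1 - 2*t*(w:ℝ)*(∑ i ∈ Finset.univ.filter (fun i => (j, i) ∈ s), x i ^ 2)))⁻¹ *
          Real.exp ((t / (1 - 2*t*(w:ℝ)*(∑ i ∈ Finset.univ.filter (fun i => (j, i) ∈ s), x i ^ 2))) *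
            (∑ i ∈ Finset.univ.filter (fun i => (j,i) ∉ s), x i * a (j, i)) ^ 2))) := by
    intro s
    induction s using Finset.induction_on with
    | empty =>
      rw [lmarginal_empty]
      funext a
      show ENNReal.ofReal _ = ENNReal.ofReal _
      congr 1
      rw [Finset.mul_sum, Real.exp_sum]
      refine Finset.prod_congr rfl fun j _ => ?_
      simp
    | @insert p s hp ih =>
      obtain ⟨j₀, i₀⟩ := p
      set Φ : Fin k → ((Fin k × Fin d) → ℝ) → ℝ := fun j b =>
        ((Real.sqrt (1 - 2*t*(w:ℝ)*(∑ i ∈ Finset.univ.filter (fun i => ((j, i) : Fin k × Fin d) ∈ s), x i ^ 2)))⁻¹ *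
          Real.exp ((t / (1 - 2*t*(w:ℝ)*(∑ i ∈ Finset.univ.filter (fun i => ((j, i) : Fin k × Fin d) ∈ s), x i ^ 2))) *
            (∑ i ∈ Finset.univ.filter (fun i => ((j,i) : Fin k × Fin d) ∉ s), x i * b (j, i)) ^ 2)) with hΦ
      set ΦN : Fin k → ((Fin k × Fin d) → ℝ) → ℝ := fun j b =>
        ((Real.sqrt (1 - 2*t*(w:ℝ)*(∑ i ∈ Finset.univ.filter (fun i => ((j, i) : Fin k × Fin d) ∈ insert (j₀,i₀) s), x i ^ 2)))⁻¹ *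
          Real.exp ((t / (1 - 2*t*(w:ℝ)*(∑ i ∈ Finset.univ.filter (fun i => ((j, i) : Fin k × Fin d) ∈ insert (j₀,i₀) s), x i ^ 2))) *
            (∑ i ∈ Finset.univ.filter (fun i => ((j,i) : Fin k × Fin d) ∉ insert (j₀,i₀) s), x i * b (j, i)) ^ 2)) with hΦN
      have ih' : (∫⋯∫⁻_s, F ∂fun _ => gaussianReal 0 w) = fun b => ENNReal.ofReal (∏ j, Φ j b) := ih
      have hΦ0 : ∀ j b, 0 ≤ Φ j b := by
        intro j b; rw [hΦ]; positivity
      funext a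
      rw [lmarginal_insert _ hFmeas hp]
      show _ = ENNReal.ofReal (∏ j, ΦN j a)
      simp_rw [ih']
      set m0 : ℝ := ∑ i ∈ Finset.univ.filter (fun i => ((j₀, i) : Fin k × Fin d) ∈ s), x i ^ 2 with hm0def
      have hden0 : 0 < 1 - 2*t*(w:ℝ)*m0 := hdpos s j₀
      set den : ℝ := 1 - 2*t*(w:ℝ)*m0 with hdendef
      set τ : ℝ := t / den with hτdef
      set r0 : ℝ := ∑ i ∈ (Finset.univ.filter (fun i => ((j₀, i) : Fin k × Fin d) ∉ s)).erase i₀,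
        x i * a (j₀, i) with hr0def
      set Krest : ℝ := ∏ j ∈ Finset.univ.erase j₀, Φ j a with hKrest
      have hKrest0 : 0 ≤ Krest := by
        rw [hKrest]; exact Finset.prod_nonneg fun j _ => hΦ0 j a
      have hi₀mem : i₀ ∈ Finset.univ.filter (fun i => ((j₀,i) : Fin k × Fin d) ∉ s) := by
        simp [hp]
      have hsplit : ∀ y : ℝ,
          (∏ j, Φ j (Function.update a ((j₀,i₀) : Fin k × Fin d) y))
          = (Krest * (Real.sqrt den)⁻¹) * Real.exp (τ * (x i₀ * y + r0)^2) := by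
        intro y
        have hup : ∀ (j : Fin k), j ≠ j₀ → ∀ i : Fin d,
            (Function.update a ((j₀,i₀) : Fin k × Fin d) y) (j, i) = a (j, i) := by
          intro j hj i
          exact Function.update_of_ne (by simp [Prod.ext_iff, hj]) _ _
        have h2 : (∑ i ∈ Finset.univ.filter (fun i => ((j₀,i) : Fin k × Fin d) ∉ s),
            x i * (Function.update a ((j₀,i₀) : Fin k × Fin d) y) (j₀, i)) = x i₀ * y + r0 := by
          rw [← Finset.add_sum_erase _ _ hi₀mem]
          congr 1
          · rw [Function.update_self]
          · rw [hr0def]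
            refine Finset.sum_congr rfl fun i hi => ?_
            simp only [Finset.mem_erase] at hi
            rw [Function.update_of_ne (by simp [Prod.ext_iff, hi.1])]
        rw [← Finset.prod_erase_mul Finset.univ
          (fun j => Φ j (Function.update a ((j₀,i₀) : Fin k × Fin d) y)) (Finset.mem_univ j₀)]
        rw [mul_assoc]
        congr 1
        · rw [hKrest]
          refine Finset.prod_congr rfl fun j hj => ?_
          simp only [Finset.mem_erase] at hj
          rw [hΦ]
          simp only []
          have heq : (∑ i ∈ Finset.univ.filter (fun i => ((j,i) : Fin k × Fin d) ∉ s),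
              x i * (Function.update a ((j₀,i₀) : Fin k × Fin d) y) (j, i))
              = ∑ i ∈ Finset.univ.filter (fun i => ((j,i) : Fin k × Fin d) ∉ s), x i * a (j, i) :=
            Finset.sum_congr rfl fun i _ => by rw [hup j hj.1 i]
          rw [heq]
        · rw [hΦ]
          simp only []
          rw [h2]
      simp_rw [hsplit]
      have hKd0 : 0 ≤ Krest * (Real.sqrt den)⁻¹ := by positivity
      simp_rw [ENNReal.ofReal_mul hKd0]
      have hmeas2 : Measurable fun y : ℝ => ENNReal.ofReal (Real.exp (τ*(x i₀ * y + r0)^2)) := by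
        have hm1 : Measurable fun y : ℝ => τ*(x i₀ * y + r0)^2 :=
          (((measurable_id.const_mul (x i₀)).add_const r0).pow_const 2).const_mul τ
        exact (Real.measurable_exp.comp hm1).ennreal_ofReal
      rw [lintegral_const_mul _ hmeas2]
      have hfins : Finset.univ.filter (fun i => ((j₀,i) : Fin k × Fin d) ∈ insert ((j₀,i₀) : Fin k × Fin d) s)
          = insert i₀ (Finset.univ.filter (fun i => ((j₀,i) : Fin k × Fin d) ∈ s)) := by
        ext i
        simp [Prod.ext_iff]
      have hi₀nm : i₀ ∉ Finset.univ.filter (fun i => ((j₀,i) : Fin k × Fin d) ∈ s) := by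
        simp [hp]
      have hmins : (∑ i ∈ Finset.univ.filter (fun i => ((j₀,i) : Fin k × Fin d) ∈ insert ((j₀,i₀) : Fin k × Fin d) s), x i ^ 2)
          = x i₀ ^ 2 + m0 := by
        rw [hfins, Finset.sum_insert hi₀nm, hm0def]
      have hden'0 : 0 < 1 - 2*t*(w:ℝ)*(x i₀ ^ 2 + m0) := by
        have h := hdpos (insert ((j₀,i₀) : Fin k × Fin d) s) j₀
        rwa [hmins] at h
      have hcond : 2 * τ * (w:ℝ) * (x i₀)^2 < 1 := by
        rw [hτdef, show 2 * (t/den) * (w:ℝ) * (x i₀)^2 = (2*t*(w:ℝ)*(x i₀)^2)/den by ring,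
          div_lt_one hden0, hdendef]
        nlinarith [hden'0]
      rw [gauss_lintegral w hw τ (x i₀) r0 hcond]
      rw [← ENNReal.ofReal_mul hKd0]
      congr 1
      set D2 : ℝ := 1 - 2*τ*(w:ℝ)*(x i₀)^2 with hD2def
      have hD20 : 0 < D2 := by
        rw [hD2def]
        nlinarith [hcond, sq_nonneg (x i₀), mul_nonneg (mul_nonneg (abs_nonneg τ) hwnn) (sq_nonneg (x i₀))]
      have hmul : den * D2 = 1 - 2*t*(w:ℝ)*(x i₀ ^ 2 + m0) := by
        rw [hD2def, hτdef, hdendef]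
        have hden0' : 1 - 2*t*(w:ℝ)*m0 ≠ 0 := ne_of_gt hden0
        field_simp
        ring
      rw [← Finset.prod_erase_mul Finset.univ (fun j => ΦN j a) (Finset.mem_univ j₀)]
      have hrest : ∏ j ∈ Finset.univ.erase j₀, ΦN j a = Krest := by
        rw [hKrest]
        refine Finset.prod_congr rfl fun j hj => ?_
        simp only [Finset.mem_erase] at hj
        have hf1 : Finset.univ.filter (fun i => ((j,i) : Fin k × Fin d) ∈ insert ((j₀,i₀) : Fin k × Fin d) s)
            = Finset.univ.filter (fun i => ((j,i) : Fin k × Fin d) ∈ s) := by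
          ext i
          simp [Prod.ext_iff, hj.1]
        have hf2 : Finset.univ.filter (fun i => ((j,i) : Fin k × Fin d) ∉ insert ((j₀,i₀) : Fin k × Fin d) s)
            = Finset.univ.filter (fun i => ((j,i) : Fin k × Fin d) ∉ s) := by
          ext i
          simp [Prod.ext_iff, hj.1]
        rw [hΦN, hΦ]
        simp only []
        rw [hf1, hf2]
      rw [hrest]
      have hremins : Finset.univ.filter (fun i => ((j₀,i) : Fin k × Fin d) ∉ insert ((j₀,i₀) : Fin k × Fin d) s)
          = (Finset.univ.filter (fun i => ((j₀,i) : Fin k × Fin d) ∉ s)).erase i₀ := by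
        ext i
        simp [Prod.ext_iff]
      have hΦN0 : ΦN j₀ a = (Real.sqrt (den * D2))⁻¹ * Real.exp ((τ/D2) * r0 ^ 2) := by
        rw [hΦN]
        simp only []
        rw [hmins, hremins, ← hr0def, hmul]
        congr 2
        rw [hτdef, div_div, hmul]
      rw [hΦN0, Real.sqrt_mul (le_of_lt hden0), mul_inv]
      ring
  rw [lintegral_eq_lmarginal_univ (fun _ => (0:ℝ)), main Finset.univ]
  have h1 : ∀ j : Fin k, Finset.univ.filter (fun i : Fin d => ((j,i) : Fin k × Fin d) ∈ Finset.univ) = Finset.univ := by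
    intro j; simp
  have h2 : ∀ j : Fin k, Finset.univ.filter (fun i : Fin d => ((j,i) : Fin k × Fin d) ∉ Finset.univ) = ∅ := by
    intro j; simp
  simp only [h1, h2, Finset.sum_empty, ne_eq, mul_zero, Real.exp_zero, mul_one]
  rw [Finset.prod_const]
  congr 1
  · simp [hσ2def]

private lemma measurable_S {k d : ℕ} (x : Fin d → ℝ) :
    Measurable fun a : (Fin k × Fin d) → ℝ => ∑ j, (∑ i, x i * a (j,i))^2 :=
  Finset.measurable_sum _ (fun j _ =>
    (Finset.measurable_sum _ fun i _ =>
      ((measurable_pi_apply ((j,i)) : Measurable fun a : (Fin k × Fin d) → ℝ => a (j,i))).const_mul (x i)).pow_const 2)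

private lemma chernoff {k d : ℕ} (w : ℝ≥0) (hw : w ≠ 0) (x : Fin d → ℝ) (t θ : ℝ)
    (ht : 2 * t * (w:ℝ) * (∑ i, x i ^ 2) < 1) :
    (Measure.pi fun _ : Fin k × Fin d => gaussianReal 0 w)
      {a | t * θ ≤ t * ∑ j, (∑ i, x i * a (j, i)) ^ 2}
      ≤ ENNReal.ofReal (Real.exp (-(t * θ)) *
          (Real.sqrt (1 - 2*t*(w:ℝ)*(∑ i, x i ^ 2)))⁻¹ ^ k) := by
  set Q := Measure.pi fun _ : Fin k × Fin d => gaussianReal 0 w with hQ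
  set f : ((Fin k × Fin d) → ℝ) → ℝ≥0∞ :=
    fun a => ENNReal.ofReal (Real.exp (t * ∑ j, (∑ i, x i * a (j, i)) ^ 2)) with hf
  have hfmeas : Measurable f :=
    (Real.measurable_exp.comp ((measurable_S x).const_mul t)).ennreal_ofReal
  have hsub : {a : (Fin k × Fin d) → ℝ | t * θ ≤ t * ∑ j, (∑ i, x i * a (j, i)) ^ 2}
      ⊆ {a | ENNReal.ofReal (Real.exp (t * θ)) ≤ f a} := by
    intro a ha
    simp only [Set.mem_setOf_eq] at ha ⊢
    exact ENNReal.ofReal_le_ofReal (Real.exp_le_exp.mpr ha)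
  have hms := mul_meas_ge_le_lintegral₀ (μ := Q) hfmeas.aemeasurable (ENNReal.ofReal (Real.exp (t * θ)))
  rw [mgf_lintegral w hw x t ht] at hms
  have h1 : Q {a | t * θ ≤ t * ∑ j, (∑ i, x i * a (j, i)) ^ 2}
      ≤ Q {a | ENNReal.ofReal (Real.exp (t * θ)) ≤ f a} := measure_mono hsub
  have h2 : ENNReal.ofReal (Real.exp (t * θ)) * Q {a | ENNReal.ofReal (Real.exp (t * θ)) ≤ f a}
      ≤ ENNReal.ofReal ((Real.sqrt (1 - 2*t*(w:ℝ)*(∑ i, x i ^ 2)))⁻¹ ^ k) := hms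
  have hne : ENNReal.ofReal (Real.exp (t * θ)) ≠ 0 := by
    simp [ENNReal.ofReal_eq_zero, not_le, Real.exp_pos]
  have hnt : ENNReal.ofReal (Real.exp (t * θ)) ≠ ⊤ := ENNReal.ofReal_ne_top
  have h3 : Q {a | ENNReal.ofReal (Real.exp (t * θ)) ≤ f a}
      ≤ ENNReal.ofReal ((Real.sqrt (1 - 2*t*(w:ℝ)*(∑ i, x i ^ 2)))⁻¹ ^ k) /
        ENNReal.ofReal (Real.exp (t * θ)) := by
    rw [ENNReal.le_div_iff_mul_le (Or.inl hne) (Or.inl hnt), mul_comm]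
    exact h2
  refine le_trans (le_trans h1 h3) ?_
  rw [ENNReal.div_eq_inv_mul, ← ENNReal.ofReal_inv_of_pos (Real.exp_pos _),
    ← Real.exp_neg, ← ENNReal.ofReal_mul (le_of_lt (Real.exp_pos _))]

private lemma joint_law {k d : ℕ} {Ω : Type*} [MeasurableSpace Ω] (μ : Measure Ω)
    (A : Ω → Matrix (Fin k) (Fin d) ℝ) (v : ℝ≥0)
    (hindep : iIndepFun (fun (p : Fin k × Fin d) ω => A ω p.1 p.2) μ)
    (hdist : ∀ p : Fin k × Fin d,
      Measure.map (fun ω => A ω p.1 p.2) μ = gaussianReal 0 v) :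
    Measure.map (fun ω (p : Fin k × Fin d) => A ω p.1 p.2) μ
      = Measure.pi (fun _ => gaussianReal 0 v) := by
  have hae : ∀ p : Fin k × Fin d, AEMeasurable (fun ω => A ω p.1 p.2) μ := by
    intro p
    by_contra h
    have h0 := Measure.map_of_not_aemeasurable h
    rw [hdist p] at h0
    have h1 : (gaussianReal 0 v) Set.univ = 1 := measure_univ
    rw [h0] at h1
    simp at h1
  have haeT : AEMeasurable (fun ω (p : Fin k × Fin d) => A ω p.1 p.2) μ := by
    refine ⟨fun ω p => (hae p).mk _ ω,
      measurable_pi_lambda _ (fun p => (hae p).measurable_mk), ?_⟩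
    have hall : ∀ᵐ ω ∂μ, ∀ p : Fin k × Fin d, A ω p.1 p.2 = (hae p).mk _ ω :=
      ae_all_iff.mpr fun p => (hae p).ae_eq_mk
    filter_upwards [hall] with ω hω
    funext p
    exact hω p
  symm
  apply Measure.pi_eq
  intro s hs
  rw [Measure.map_apply_of_aemeasurable haeT (MeasurableSet.univ_pi hs)]
  have hpre : (fun ω (p : Fin k × Fin d) => A ω p.1 p.2) ⁻¹' (Set.univ.pi s)
      = ⋂ p ∈ (Finset.univ : Finset (Fin k × Fin d)), (fun ω => A ω p.1 p.2) ⁻¹' (s p) := by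
    ext ω
    simp [Set.mem_univ_pi]
  rw [hpre, hindep.measure_inter_preimage_eq_mul Finset.univ (fun p _ => hs p)]
  refine Finset.prod_congr rfl fun p _ => ?_
  rw [← Measure.map_apply_of_aemeasurable (hae p) (hs p), hdist p]

private lemma ac_transfer {α β : Type*} [MeasurableSpace α] [MeasurableSpace β]
    (e : α ≃ᵐ β) {μ ν : Measure α} {μ' ν' : Measure β}
    (hμ : MeasurePreserving e μ μ') (hν : MeasurePreserving e ν ν')
    (h : μ ≪ ν) : μ' ≪ ν' := by
  refine Measure.AbsolutelyContinuous.mk fun s hs hνs => ?_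
  have h1 : ν (e ⁻¹' s) = 0 := by
    rw [← hν.map_eq, Measure.map_apply e.measurable hs] at hνs
    exact hνs
  have h2 : μ (e ⁻¹' s) = 0 := h h1
  rw [← hμ.map_eq, Measure.map_apply e.measurable hs]
  exact h2

private lemma pi_fin_ac : ∀ (m : ℕ) (μ ν : Fin m → Measure ℝ),
    (∀ i, IsProbabilityMeasure (μ i)) → (∀ i, IsProbabilityMeasure (ν i)) →
    (∀ i, μ i ≪ ν i) → Measure.pi μ ≪ Measure.pi ν := by
  intro m
  induction m with
  | zero =>
    intro μ ν hμp hνp h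
    refine Measure.AbsolutelyContinuous.mk fun s hs hνs => ?_
    haveI := fun i => hμp i
    haveI := fun i => hνp i
    rcases Set.eq_empty_or_nonempty s with rfl|hne
    · simp
    · exfalso
      have huniv : s = Set.univ := by
        obtain ⟨a, ha⟩ := hne
        refine Set.eq_univ_of_forall fun b => ?_
        have : b = a := Subsingleton.elim _ _
        rwa [this]
      rw [huniv] at hνs
      have : (Measure.pi ν) Set.univ = 1 := measure_univ
      rw [hνs] at this
      simp at this
  | succ m ih =>
    intro μ ν hμp hνp h
    haveI := fun i => hμp i
    haveI := fun i => hνp i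
    have e := MeasurableEquiv.piFinSuccAbove (fun _ : Fin (m+1) => ℝ) 0
    have hμpre := measurePreserving_piFinSuccAbove μ 0
    have hνpre := measurePreserving_piFinSuccAbove ν 0
    have hac : (μ 0).prod (Measure.pi fun i => μ (Fin.succAbove 0 i))
        ≪ (ν 0).prod (Measure.pi fun i => ν (Fin.succAbove 0 i)) := by
      refine Measure.AbsolutelyContinuous.prod (h 0) ?_
      exact ih _ _ (fun i => hμp _) (fun i => hνp _) (fun i => h _)
    exact ac_transfer (MeasurableEquiv.piFinSuccAbove (fun _ : Fin (m+1) => ℝ) 0).symm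
      (hμpre.symm _) (hνpre.symm _) hac

private lemma pi_ac {ι : Type*} [Fintype ι] (μ ν : ι → Measure ℝ)
    (hμp : ∀ i, IsProbabilityMeasure (μ i)) (hνp : ∀ i, IsProbabilityMeasure (ν i))
    (h : ∀ i, μ i ≪ ν i) : Measure.pi μ ≪ Measure.pi ν := by
  have e : Fin (Fintype.card ι) ≃ ι := (Fintype.equivFin ι).symm
  exact ac_transfer (MeasurableEquiv.piCongrLeft (fun _ => ℝ) e)
    (measurePreserving_piCongrLeft μ e) (measurePreserving_piCongrLeft ν e)
    (pi_fin_ac (Fintype.card ι) (fun i' => μ (e i')) (fun i' => ν (e i'))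
      (fun i' => hμp _) (fun i' => hνp _) (fun i' => h _))

private lemma sqrt_inv_pow (z : ℝ) (hz : 0 < z) (k : ℕ) :
    ((Real.sqrt z)⁻¹)^k = Real.exp (-(k:ℝ)/2 * Real.log z) := by
  rw [Real.sqrt_eq_rpow, ← Real.rpow_neg_one, ← Real.rpow_natCast, ← Real.rpow_mul (le_of_lt hz),
    ← Real.rpow_mul (le_of_lt hz), Real.rpow_def_of_pos hz]
  ring_nf

set_option maxHeartbeats 1600000 in
/-- Johnson–Lindenstrauss lemma for finite sets: if `M ⊂ ℝ^d` has `n ≥ 2` points,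
`ε ∈ (0, 1/2)` and `k > 8 log n / ε²`, then a `k × d` matrix with i.i.d. `N(0, 1/k)` entries
satisfies, with positive probability, `(1-ε)‖u-v‖² ≤ ‖Au-Av‖² ≤ (1+ε)‖u-v‖²` for all pairs
`u, v ∈ M` simultaneously. -/
theorem stmt2 {k d n : ℕ} (hn : 2 ≤ n)
    (M : Finset (Fin d → ℝ)) (hM : M.card = n)
    (ε : ℝ) (hε : ε ∈ Set.Ioo (0 : ℝ) (1 / 2))
    (hk : (k : ℝ) > 8 * Real.log n / ε ^ 2)
    {Ω : Type*} [MeasurableSpace Ω] (μ : Measure Ω) [IsProbabilityMeasure μ]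
    (A : Ω → Matrix (Fin k) (Fin d) ℝ)
    (hindep : iIndepFun
      (fun (p : Fin k × Fin d) ω => A ω p.1 p.2) μ)
    (hdist : ∀ p : Fin k × Fin d,
      Measure.map (fun ω => A ω p.1 p.2) μ = gaussianReal 0 (1 / (k : NNReal))) :
    0 < μ {ω | ∀ u ∈ M, ∀ v ∈ M,
        (1 - ε) * ∑ i, (u i - v i) ^ 2 ≤
            ∑ j, ((A ω).mulVec u j - (A ω).mulVec v j) ^ 2 ∧
          ∑ j, ((A ω).mulVec u j - (A ω).mulVec v j) ^ 2 ≤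
            (1 + ε) * ∑ i, (u i - v i) ^ 2} := by
  classical
  obtain ⟨hε0, hε12⟩ := hε
  have hn1 : (1:ℝ) < (n:ℝ) := by exact_mod_cast lt_of_lt_of_le one_lt_two (by exact_mod_cast hn)
  have hn0 : (0:ℝ) < (n:ℝ) := by linarith
  have hlogn : 0 < Real.log n := Real.log_pos hn1
  have hε2 : (0:ℝ) < ε^2 := by positivity
  have hkε : 8 * Real.log n < (k:ℝ) * ε^2 := by
    rw [gt_iff_lt, div_lt_iff₀ hε2] at hk
    linarith
  have hkR : (0:ℝ) < (k:ℝ) := by nlinarith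
  have hk0 : k ≠ 0 := by
    have : 0 < k := by exact_mod_cast hkR
    omega
  -- the tilt constant
  set c : ℝ := 1 - ε^2/3 with hc
  have hc0 : 0 < c := by rw [hc]; nlinarith
  have hc1 : c < 1 := by rw [hc]; nlinarith
  -- variance of the tilted gaussian
  set w : ℝ≥0 := Real.toNNReal (c / k) with hwdef
  have hwR : (w:ℝ) = c / (k:ℝ) := Real.coe_toNNReal _ (by positivity)
  have hw0 : w ≠ 0 := by
    intro h
    have : (w:ℝ) = 0 := by rw [h]; simp
    rw [hwR] at this
    have : (0:ℝ) < c / k := by positivity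
    linarith
  have hv0 : (1 / (k:ℝ≥0)) ≠ 0 := by
    simp only [ne_eq, one_div, inv_eq_zero]
    exact_mod_cast hk0
  set Q : Measure ((Fin k × Fin d) → ℝ) := Measure.pi fun _ => gaussianReal 0 w with hQ
  set Q1 : Measure ((Fin k × Fin d) → ℝ) :=
    Measure.pi fun _ => gaussianReal 0 (1 / (k:ℝ≥0)) with hQ1
  haveI : ∀ p : Fin k × Fin d, IsProbabilityMeasure
      ((fun _ : Fin k × Fin d => gaussianReal 0 w) p) := fun _ => inferInstance
  -- canonical event
  set E₀ : Set ((Fin k × Fin d) → ℝ) := {a | ∀ u ∈ M, ∀ v ∈ M,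
      (1 - ε) * ∑ i, (u i - v i) ^ 2 ≤
          ∑ j, ((Matrix.of fun j' i' => a (j', i')).mulVec u j -
            (Matrix.of fun j' i' => a (j', i')).mulVec v j) ^ 2 ∧
        ∑ j, ((Matrix.of fun j' i' => a (j', i')).mulVec u j -
            (Matrix.of fun j' i' => a (j', i')).mulVec v j) ^ 2 ≤
          (1 + ε) * ∑ i, (u i - v i) ^ 2} with hE₀
  -- rewrite of the quadratic form
  have hFeq : ∀ (u v : Fin d → ℝ) (a : (Fin k × Fin d) → ℝ),
      (∑ j, ((Matrix.of fun j' i' => a (j', i')).mulVec u j -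
        (Matrix.of fun j' i' => a (j', i')).mulVec v j) ^ 2)
      = ∑ j, (∑ i, (u i - v i) * a (j, i)) ^ 2 := by
    intro u v a
    refine Finset.sum_congr rfl fun j _ => ?_
    congr 1
    simp only [Matrix.mulVec, dotProduct, Matrix.of_apply]
    rw [← Finset.sum_sub_distrib]
    exact Finset.sum_congr rfl fun i _ => by ring
  -- measurability of the canonical event
  have hSmeas : ∀ u v : Fin d → ℝ, Measurable fun a : (Fin k × Fin d) → ℝ =>
      ∑ j, ((Matrix.of fun j' i' => a (j', i')).mulVec u j -
        (Matrix.of fun j' i' => a (j', i')).mulVec v j) ^ 2 := by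
    intro u v
    have : (fun a : (Fin k × Fin d) → ℝ =>
        ∑ j, ((Matrix.of fun j' i' => a (j', i')).mulVec u j -
          (Matrix.of fun j' i' => a (j', i')).mulVec v j) ^ 2)
        = fun a => ∑ j, (∑ i, (u i - v i) * a (j, i)) ^ 2 := funext fun a => hFeq u v a
    rw [this]
    exact measurable_S _
  have hE₀meas : MeasurableSet E₀ := by
    have hrw : E₀ = ⋂ u ∈ (M : Set (Fin d → ℝ)), ⋂ v ∈ (M : Set (Fin d → ℝ)),
        ({a : (Fin k × Fin d) → ℝ | (1 - ε) * ∑ i, (u i - v i) ^ 2 ≤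
          ∑ j, ((Matrix.of fun j' i' => a (j', i')).mulVec u j -
            (Matrix.of fun j' i' => a (j', i')).mulVec v j) ^ 2} ∩
         {a | ∑ j, ((Matrix.of fun j' i' => a (j', i')).mulVec u j -
            (Matrix.of fun j' i' => a (j', i')).mulVec v j) ^ 2 ≤
          (1 + ε) * ∑ i, (u i - v i) ^ 2}) := by
      ext a
      simp only [hE₀, Set.mem_setOf_eq, Set.mem_iInter, Set.mem_inter_iff, Finset.mem_coe]
    rw [hrw]
    refine MeasurableSet.biInter M.countable_toSet fun u hu => ?_
    refine MeasurableSet.biInter M.countable_toSet fun v hv => ?_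
    exact (measurableSet_le measurable_const (hSmeas u v)).inter
      (measurableSet_le (hSmeas u v) measurable_const)
  -- symmetry
  have hsymσ : ∀ u v : Fin d → ℝ, (∑ i, (v i - u i)^2) = ∑ i, (u i - v i)^2 :=
    fun u v => Finset.sum_congr rfl fun i _ => by ring
  have hsymF : ∀ (u v : Fin d → ℝ) (a : (Fin k × Fin d) → ℝ),
      (∑ j, (∑ i, (v i - u i) * a (j, i)) ^ 2) = ∑ j, (∑ i, (u i - v i) * a (j, i)) ^ 2 := by
    intro u v a
    refine Finset.sum_congr rfl fun j _ => ?_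
    have : (∑ i, (v i - u i) * a (j, i)) = -∑ i, (u i - v i) * a (j, i) := by
      rw [← Finset.sum_neg_distrib]
      exact Finset.sum_congr rfl fun i _ => by ring
    rw [this, neg_sq]
  -- the common tail bound
  set e₀ : ℝ := Real.exp (-((k:ℝ)/2 * (ε^2/2))) with he₀
  have he₀pos : 0 < e₀ := Real.exp_pos _
  -- upper tail
  have hupper : ∀ u v : Fin d → ℝ, u ≠ v →
      Q {a | (1+ε) * ∑ i, (u i - v i)^2 ≤ ∑ j, (∑ i, (u i - v i) * a (j, i)) ^ 2}
        ≤ ENNReal.ofReal e₀ := by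
    intro u v huv
    set x : Fin d → ℝ := fun i => u i - v i with hx
    set σ2 : ℝ := ∑ i, x i ^ 2 with hσ2
    have hσ2pos : 0 < σ2 := by
      have hex : ∃ i, x i ≠ 0 := by
        by_contra hcon
        push_neg at hcon
        apply huv
        funext i
        have := hcon i
        rw [hx] at this
        simpa [sub_eq_zero] using this
      obtain ⟨i0, hi0⟩ := hex
      exact Finset.sum_pos' (fun i _ => sq_nonneg _) ⟨i0, Finset.mem_univ _, by positivity⟩
    set t : ℝ := ((k:ℝ) * (1 - c/(1+ε))) / (2*c*σ2) with htdef
    have hcfrac : 0 < c/(1+ε) := by positivity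
    have hcfrac1 : c/(1+ε) < 1 := by
      rw [div_lt_one (by linarith)]
      linarith
    have ht0 : 0 ≤ t := by
      rw [htdef]
      apply div_nonneg _ (by positivity)
      apply mul_nonneg (le_of_lt hkR)
      linarith
    have h2t : 2*t*(w:ℝ)*σ2 = 1 - c/(1+ε) := by
      rw [htdef, hwR]
      field_simp
    have hlt : 2*t*(w:ℝ)*σ2 < 1 := by rw [h2t]; linarith
    have hsub : {a : (Fin k × Fin d) → ℝ |
        (1+ε) * σ2 ≤ ∑ j, (∑ i, x i * a (j, i)) ^ 2}
        ⊆ {a | t * ((1+ε) * σ2) ≤ t * ∑ j, (∑ i, x i * a (j, i)) ^ 2} :=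
      fun a ha => mul_le_mul_of_nonneg_left ha ht0
    refine le_trans (le_trans (measure_mono hsub) (chernoff w hw0 x t ((1+ε)*σ2) hlt)) ?_
    apply ENNReal.ofReal_le_ofReal
    have hone : 1 - 2*t*(w:ℝ)*σ2 = c/(1+ε) := by rw [h2t]; ring
    rw [hone, sqrt_inv_pow _ hcfrac, ← Real.exp_add, he₀]
    apply Real.exp_le_exp.mpr
    have htθ : t * ((1+ε) * σ2) = (k:ℝ)/2 * ((1+ε)/c - 1) := by
      rw [htdef]
      field_simp
    have hlog : Real.log (c/(1+ε)) = -Real.log ((1+ε)/c) := by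
      rw [← Real.log_inv]
      congr 1
      field_simp
    rw [htθ, hlog]
    have hA := ineqA hε0 hε12
    rw [← hc] at hA
    nlinarith [hA, hkR]
  -- lower tail
  have hlower : ∀ u v : Fin d → ℝ, u ≠ v →
      Q {a | (∑ j, (∑ i, (u i - v i) * a (j, i)) ^ 2) ≤ (1-ε) * ∑ i, (u i - v i)^2}
        ≤ ENNReal.ofReal e₀ := by
    intro u v huv
    set x : Fin d → ℝ := fun i => u i - v i with hx
    set σ2 : ℝ := ∑ i, x i ^ 2 with hσ2
    have hσ2pos : 0 < σ2 := by
      have hex : ∃ i, x i ≠ 0 := by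
        by_contra hcon
        push_neg at hcon
        apply huv
        funext i
        have := hcon i
        rw [hx] at this
        simpa [sub_eq_zero] using this
      obtain ⟨i0, hi0⟩ := hex
      exact Finset.sum_pos' (fun i _ => sq_nonneg _) ⟨i0, Finset.mem_univ _, by positivity⟩
    set t : ℝ := ((k:ℝ) * (1 - c/(1-ε))) / (2*c*σ2) with htdef
    have hεlt : (0:ℝ) < 1 - ε := by linarith
    have hcfrac : 0 < c/(1-ε) := by positivity
    have hcfrac1 : 1 < c/(1-ε) := by
      rw [lt_div_iff₀ hεlt]
      rw [hc]
      nlinarith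
    have ht0 : t ≤ 0 := by
      rw [htdef]
      apply div_nonpos_of_nonpos_of_nonneg _ (by positivity)
      apply mul_nonpos_of_nonneg_of_nonpos (le_of_lt hkR)
      linarith
    have h2t : 2*t*(w:ℝ)*σ2 = 1 - c/(1-ε) := by
      rw [htdef, hwR]
      field_simp
    have hlt : 2*t*(w:ℝ)*σ2 < 1 := by rw [h2t]; linarith
    have hsub : {a : (Fin k × Fin d) → ℝ |
        (∑ j, (∑ i, x i * a (j, i)) ^ 2) ≤ (1-ε) * σ2}
        ⊆ {a | t * ((1-ε) * σ2) ≤ t * ∑ j, (∑ i, x i * a (j, i)) ^ 2} :=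
      fun a ha => mul_le_mul_of_nonpos_left ha ht0
    refine le_trans (le_trans (measure_mono hsub) (chernoff w hw0 x t ((1-ε)*σ2) hlt)) ?_
    apply ENNReal.ofReal_le_ofReal
    have hone : 1 - 2*t*(w:ℝ)*σ2 = c/(1-ε) := by rw [h2t]; ring
    rw [hone, sqrt_inv_pow _ hcfrac, ← Real.exp_add, he₀]
    apply Real.exp_le_exp.mpr
    have htθ : t * ((1-ε) * σ2) = (k:ℝ)/2 * ((1-ε)/c - 1) := by
      rw [htdef]
      field_simp
    have hlog : Real.log (c/(1-ε)) = -Real.log ((1-ε)/c) := by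
      rw [← Real.log_inv]
      congr 1
      field_simp
    rw [htθ, hlog]
    have hB := ineqB hε0 hε12
    rw [← hc] at hB
    nlinarith [hB, hkR]
  haveI hQprob : IsProbabilityMeasure Q := by
    constructor
    rw [hQ, Measure.pi_univ]
    simp
  haveI hQ1prob : IsProbabilityMeasure Q1 := by
    constructor
    rw [hQ1, Measure.pi_univ]
    simp
  -- enumerate M
  set eM : {x // x ∈ M} ≃ Fin n := M.equivFin.trans (finCongr hM) with heM
  set g : Fin n → (Fin d → ℝ) := fun i => (eM.symm i : Fin d → ℝ) with hgdef
  have hg : ∀ (u : Fin d → ℝ) (hu : u ∈ M), g (eM ⟨u, hu⟩) = u := by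
    intro u hu
    rw [hgdef]
    simp
  have hginj : Function.Injective g := by
    intro i j hij
    have h1 : eM.symm i = eM.symm j := Subtype.ext hij
    have := congrArg eM h1
    simpa using this
  set Cset : Fin n × Fin n → Set ((Fin k × Fin d) → ℝ) := fun q =>
    if q.1 < q.2 then
      {a | (1+ε) * ∑ i, (g q.1 i - g q.2 i)^2 ≤ ∑ j, (∑ i, (g q.1 i - g q.2 i) * a (j, i)) ^ 2}
    else
      {a | (∑ j, (∑ i, (g q.1 i - g q.2 i) * a (j, i)) ^ 2) ≤ (1-ε) * ∑ i, (g q.1 i - g q.2 i)^2}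
    with hCset
  have hCbound : ∀ q ∈ (Finset.univ : Finset (Fin n)).offDiag, Q (Cset q) ≤ ENNReal.ofReal e₀ := by
    intro q hq
    have hne : g q.1 ≠ g q.2 := fun h => (Finset.mem_offDiag.mp hq).2.2 (hginj h)
    simp only [hCset]
    by_cases h : q.1 < q.2
    · rw [if_pos h]
      exact hupper _ _ hne
    · rw [if_neg h]
      exact hlower _ _ hne
  have hcover : E₀ᶜ ⊆ ⋃ q ∈ ((Finset.univ : Finset (Fin n)).offDiag : Set (Fin n × Fin n)), Cset q := by
    intro a ha
    simp only [hE₀, Set.mem_compl_iff, Set.mem_setOf_eq] at ha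
    push_neg at ha
    obtain ⟨u, hu, v, hv, hbad⟩ := ha
    rw [hFeq u v a] at hbad
    have huv : u ≠ v := by
      rintro rfl
      have h1 : (1 - ε) * ∑ i, (u i - u i)^2 ≤ ∑ j, (∑ i, (u i - u i) * a (j, i)) ^ 2 := by
        simp [sub_self]
      have h2 := hbad h1
      simp [sub_self] at h2
    have hiuv : eM ⟨u, hu⟩ ≠ eM ⟨v, hv⟩ := by
      intro h
      apply huv
      rw [← hg u hu, ← hg v hv, h]
    set iu := eM ⟨u, hu⟩
    set iv := eM ⟨v, hv⟩
    have hgu : g iu = u := hg u hu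
    have hgv : g iv = v := hg v hv
    by_cases hfail : (1 - ε) * ∑ i, (u i - v i)^2 ≤ ∑ j, (∑ i, (u i - v i) * a (j, i)) ^ 2
    case neg =>
      have hflt : (∑ j, (∑ i, (u i - v i) * a (j, i)) ^ 2) ≤ (1-ε) * ∑ i, (u i - v i)^2 :=
        le_of_lt (not_le.mp hfail)
      rcases lt_or_gt_of_ne hiuv with hlt | hgt
      · -- iu < iv : use q = (iv, iu), not ordered, lower event for (v,u)
        have hqmem : ((iv, iu) : Fin n × Fin n) ∈
            (((Finset.univ : Finset (Fin n)).offDiag : Finset (Fin n × Fin n)) : Set (Fin n × Fin n)) :=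
          Finset.mem_coe.mpr (Finset.mem_offDiag.mpr
            ⟨Finset.mem_univ _, Finset.mem_univ _, hiuv.symm⟩)
        refine Set.mem_biUnion hqmem ?_
        simp only [hCset]
        have hnot : ¬ (iv < iu) := not_lt.mpr (le_of_lt hlt)
        rw [if_neg hnot]
        simp only [Set.mem_setOf_eq]
        rw [hgv, hgu, hsymF u v a, hsymσ u v]
        exact hflt
      · have hqmem : ((iu, iv) : Fin n × Fin n) ∈
            (((Finset.univ : Finset (Fin n)).offDiag : Finset (Fin n × Fin n)) : Set (Fin n × Fin n)) :=
          Finset.mem_coe.mpr (Finset.mem_offDiag.mpr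
            ⟨Finset.mem_univ _, Finset.mem_univ _, hiuv⟩)
        refine Set.mem_biUnion hqmem ?_
        simp only [hCset]
        have hnot : ¬ (iu < iv) := not_lt.mpr (le_of_lt hgt)
        rw [if_neg hnot]
        simp only [Set.mem_setOf_eq]
        rw [hgu, hgv]
        exact hflt
    case pos =>
      have hflt : (1+ε) * ∑ i, (u i - v i)^2 ≤ ∑ j, (∑ i, (u i - v i) * a (j, i)) ^ 2 :=
        le_of_lt (hbad hfail)
      rcases lt_or_gt_of_ne hiuv with hlt | hgt
      · have hqmem : ((iu, iv) : Fin n × Fin n) ∈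
            (((Finset.univ : Finset (Fin n)).offDiag : Finset (Fin n × Fin n)) : Set (Fin n × Fin n)) :=
          Finset.mem_coe.mpr (Finset.mem_offDiag.mpr
            ⟨Finset.mem_univ _, Finset.mem_univ _, hiuv⟩)
        refine Set.mem_biUnion hqmem ?_
        simp only [hCset]
        rw [if_pos hlt]
        simp only [Set.mem_setOf_eq]
        rw [hgu, hgv]
        exact hflt
      · have hqmem : ((iv, iu) : Fin n × Fin n) ∈
            (((Finset.univ : Finset (Fin n)).offDiag : Finset (Fin n × Fin n)) : Set (Fin n × Fin n)) :=
          Finset.mem_coe.mpr (Finset.mem_offDiag.mpr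
            ⟨Finset.mem_univ _, Finset.mem_univ _, hiuv.symm⟩)
        refine Set.mem_biUnion hqmem ?_
        simp only [hCset]
        rw [if_pos hgt]
        simp only [Set.mem_setOf_eq]
        rw [hgv, hgu, hsymF u v a, hsymσ u v]
        exact hflt
  have hQEc : Q E₀ᶜ ≤ ((n*n - n : ℕ) : ℝ≥0∞) * ENNReal.ofReal e₀ := by
    refine le_trans (measure_mono hcover) ?_
    refine le_trans (measure_biUnion_finset_le _ _) ?_
    have hsum := Finset.sum_le_card_nsmul ((Finset.univ : Finset (Fin n)).offDiag)
      (fun q => Q (Cset q)) (ENNReal.ofReal e₀) hCbound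
    rw [Finset.offDiag_card, Finset.card_univ, Fintype.card_fin] at hsum
    rw [nsmul_eq_mul] at hsum
    exact hsum
  have hreal : ((n*n - n : ℕ) : ℝ) * e₀ < 1 := by
    have hle : n ≤ n * n := Nat.le_mul_of_pos_left n (by omega)
    have hcast : ((n*n - n : ℕ) : ℝ) = (n:ℝ)*(n:ℝ) - (n:ℝ) := by
      rw [Nat.cast_sub hle]
      push_cast
      ring
    have he₀lt : e₀ < ((n:ℝ)^2)⁻¹ := by
      rw [he₀]
      have h1 : Real.exp (-(2 * Real.log n)) = ((n:ℝ)^2)⁻¹ := by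
        rw [Real.exp_neg]
        congr 1
        rw [show (2:ℝ) * Real.log n = Real.log ((n:ℝ)^2) by rw [Real.log_pow]; push_cast; ring]
        exact Real.exp_log (by positivity)
      rw [← h1]
      apply Real.exp_lt_exp.mpr
      nlinarith
    rw [hcast]
    have hnn : (0:ℝ) ≤ (n:ℝ)*(n:ℝ) - (n:ℝ) := by nlinarith
    calc ((n:ℝ)*(n:ℝ) - (n:ℝ)) * e₀ ≤ ((n:ℝ)*(n:ℝ)) * e₀ := by nlinarith
      _ < ((n:ℝ)*(n:ℝ)) * ((n:ℝ)^2)⁻¹ := by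
          apply mul_lt_mul_of_pos_left he₀lt (by positivity)
      _ = 1 := by rw [pow_two]; field_simp
  have hQEclt : Q E₀ᶜ < 1 := by
    refine lt_of_le_of_lt hQEc ?_
    rw [show ((n*n - n : ℕ) : ℝ≥0∞) = ENNReal.ofReal ((n*n - n : ℕ) : ℝ) by rw [ENNReal.ofReal_natCast]]
    rw [← ENNReal.ofReal_mul (Nat.cast_nonneg _)]
    exact ENNReal.ofReal_lt_one.mpr hreal
  have hQE₀pos : 0 < Q E₀ := by
    rw [pos_iff_ne_zero]
    intro h0
    have h1 : (1:ℝ≥0∞) ≤ Q E₀ᶜ := by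
      have hun : Q Set.univ ≤ Q E₀ + Q E₀ᶜ := by
        rw [← Set.union_compl_self E₀]
        exact measure_union_le _ _
      rw [measure_univ, h0, zero_add] at hun
      exact hun
    exact absurd (lt_of_le_of_lt h1 hQEclt) (lt_irrefl _)
  -- transfer to untilted measure
  have hac : Q ≪ Q1 := by
    rw [hQ, hQ1]
    exact pi_ac _ _ (fun _ => inferInstance) (fun _ => inferInstance)
      (fun _ => (gaussianReal_absolutelyContinuous 0 hw0).trans
        (gaussianReal_absolutelyContinuous' 0 hv0))
  have hQ1pos : 0 < Q1 E₀ := by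
    rw [pos_iff_ne_zero]
    intro h
    exact absurd (hac h) (ne_of_gt hQE₀pos)
  -- identify with μ of the event
  have hmap := joint_law μ A (1/(k:ℝ≥0)) hindep hdist
  have haeT : AEMeasurable (fun ω (p : Fin k × Fin d) => A ω p.1 p.2) μ := by
    by_contra h
    have h0 := Measure.map_of_not_aemeasurable h
    rw [hmap] at h0
    have h1 : Q1 Set.univ = 1 := measure_univ
    rw [hQ1, h0] at h1
    simp at h1
  have hpre : {ω | ∀ u ∈ M, ∀ v ∈ M,
      (1 - ε) * ∑ i, (u i - v i) ^ 2 ≤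
          ∑ j, ((A ω).mulVec u j - (A ω).mulVec v j) ^ 2 ∧
        ∑ j, ((A ω).mulVec u j - (A ω).mulVec v j) ^ 2 ≤
          (1 + ε) * ∑ i, (u i - v i) ^ 2}
      = (fun ω (p : Fin k × Fin d) => A ω p.1 p.2) ⁻¹' E₀ := rfl
  rw [hpre, ← Measure.map_apply_of_aemeasurable haeT hE₀meas, hmap]
  exact hQ1pos
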